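/- In the free semigroup on a set Ω with |Ω| ≥ 2, the relation ∼_s is strictly larger than ∼_p (the transitive closure of primary conjugacy): for distinct letters α, β, α²β² ∼_s αβαβ but α²β² is not ∼_p-related to αβαβ. -/

import Mathlib

/-- `s ∼ₛ¹ t`: `s = p₁⋯pₙ` and `t = p_{f(1)}⋯p_{f(n)}` for some `p_i ∈ S¹` and a
permutation `f` of `{1,…,n}` (encoded as a list permutation). -/
def SimS1 {S : Type*} [Semigroup S] (s t : S) : Prop :=
  ∃ l l' : List (WithOne S), l.Perm l' ∧ (s : WithOne S) = l.prod ∧ (t : WithOne S) = l'.prod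

/-- `∼ₛ`: the transitive closure of `∼ₛ¹`. -/
def SimS {S : Type*} [Semigroup S] : S → S → Prop := Relation.TransGen SimS1

/-- Primary conjugacy: `s ∼ₚ¹ t` iff `s = pr` and `t = rp` for some `p, r ∈ S¹`. -/
def SimP1 {S : Type*} [Semigroup S] (s t : S) : Prop :=
  ∃ p r : WithOne S, (s : WithOne S) = p * r ∧ (t : WithOne S) = r * p

/-- `∼ₚ`: the transitive closure of `∼ₚ¹`. -/
def SimP {S : Type*} [Semigroup S] : S → S → Prop := Relation.TransGen SimP1

/-- The word underlying an element of the free semigroup. -/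
def FSList {Ω : Type*} (x : FreeSemigroup Ω) : List Ω := x.head :: x.tail

theorem FSList_mul {Ω : Type*} (x y : FreeSemigroup Ω) :
    FSList (x * y) = FSList x ++ FSList y := by
  simp [FSList]

theorem FSList_inj {Ω : Type*} {x y : FreeSemigroup Ω} (h : FSList x = FSList y) : x = y := by
  cases x; cases y
  simpa [FSList] using h

theorem simP1_rotate {Ω : Type*} {s t : FreeSemigroup Ω} (h : SimP1 s t) :
    ∃ n, FSList t = (FSList s).rotate n := by
  obtain ⟨p, r, hs, ht⟩ := h
  induction p using WithOne.recOneCoe with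
  | one =>
    rw [one_mul] at hs; rw [mul_one] at ht
    rw [← hs] at ht
    exact ⟨0, by rw [WithOne.coe_inj.mp ht, List.rotate_zero]⟩
  | coe x =>
    induction r using WithOne.recOneCoe with
    | one =>
      rw [mul_one] at hs; rw [one_mul] at ht
      rw [← hs] at ht
      exact ⟨0, by rw [WithOne.coe_inj.mp ht, List.rotate_zero]⟩
    | coe y =>
      rw [← WithOne.coe_mul] at hs ht
      rw [WithOne.coe_inj.mp hs, WithOne.coe_inj.mp ht]
      exact ⟨(FSList x).length, by
        rw [FSList_mul, FSList_mul, List.rotate_append_length_eq]⟩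

theorem simP_rotate {Ω : Type*} {s t : FreeSemigroup Ω} (h : SimP s t) :
    ∃ n, FSList t = (FSList s).rotate n := by
  induction h with
  | single h1 => exact simP1_rotate h1
  | tail _ h1 ih =>
    obtain ⟨n, hn⟩ := ih
    obtain ⟨m, hm⟩ := simP1_rotate h1
    exact ⟨n + m, by rw [hm, hn, List.rotate_rotate]⟩

/-- In the free semigroup on `Ω` with distinct letters `α ≠ β`:
`α²β² ∼ₛ αβαβ` but not `α²β² ∼ₚ αβαβ`. -/
theorem free_semigroup_simS_strictly_larger {Ω : Type*} (α β : Ω) (hne : α ≠ β) :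
    SimS (FreeSemigroup.of α * FreeSemigroup.of α * (FreeSemigroup.of β * FreeSemigroup.of β))
        (FreeSemigroup.of α * FreeSemigroup.of β * (FreeSemigroup.of α * FreeSemigroup.of β)) ∧
      ¬ SimP
        (FreeSemigroup.of α * FreeSemigroup.of α * (FreeSemigroup.of β * FreeSemigroup.of β))
        (FreeSemigroup.of α * FreeSemigroup.of β * (FreeSemigroup.of α * FreeSemigroup.of β)) := by
  set a : WithOne (FreeSemigroup Ω) := ((FreeSemigroup.of α : FreeSemigroup Ω) : WithOne (FreeSemigroup Ω)) with ha
  set b : WithOne (FreeSemigroup Ω) := ((FreeSemigroup.of β : FreeSemigroup Ω) : WithOne (FreeSemigroup Ω)) with hb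
  constructor
  · apply Relation.TransGen.single
    refine ⟨[a, a, b, b], [a, b, a, b], ?_, ?_, ?_⟩
    · have : [a, a, b, b].Perm [a, b, a, b] := by
        refine List.Perm.cons a ?_
        exact List.Perm.swap b a [b]
      exact this
    · simp [ha, hb, List.prod_cons, WithOne.coe_mul, mul_assoc]
    · simp [ha, hb, List.prod_cons, WithOne.coe_mul, mul_assoc]
  · intro h
    obtain ⟨n, hn⟩ := simP_rotate h
    have hs : FSList (FreeSemigroup.of α * FreeSemigroup.of α *
        (FreeSemigroup.of β * FreeSemigroup.of β)) = [α, α, β, β] := by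
      simp [FSList_mul, FSList, FreeSemigroup.of]
    have ht : FSList (FreeSemigroup.of α * FreeSemigroup.of β *
        (FreeSemigroup.of α * FreeSemigroup.of β)) = [α, β, α, β] := by
      simp [FSList_mul, FSList, FreeSemigroup.of]
    rw [hs, ht] at hn
    rw [← List.rotate_mod] at hn
    have hlen : ([α, α, β, β] : List Ω).length = 4 := rfl
    rw [hlen] at hn
    have h4 : n % 4 < 4 := Nat.mod_lt _ (by norm_num)
    interval_cases h : n % 4 <;> simp [List.rotate] at hn <;> tauto
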